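/- Installation preserves validity: if s is a valid state and the precondition of (install app m c lRes) holds in s (the app is not installed, component identifiers in m are fresh and pairwise distinct, permissions defined in m are pairwise distinct and not defined by other apps, and intent filters are well formed), then install_post app m c lRes s is a valid state. -/

import Mathlib

abbrev AppId := ℕ
abbrev PermId := ℕ
abbrev PermGroup := ℕ
abbrev CompId := ℕ
abbrev Cert := ℕ
abbrev Res := ℕ
abbrev Val := ℕ

inductive PermLvl : Type
  | dangerous | normal | signature | signatureSystem
deriving DecidableEq

structure Perm where
  id : PermId
  group : Option PermGroup
  level : PermLvl
deriving DecidableEq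

structure Manifest where
  cmps : List CompId
  usedPerms : List PermId
  defines : List Perm

/-- A (simplified) Android state. -/
structure AndroidST where
  apps : List AppId
  grantedPermGroups : List (AppId × List PermGroup)
  grantedPerms : List (AppId × List Perm)
  manifests : List (AppId × Manifest)
  certs : List (AppId × Cert)
  defPerms : List (AppId × List Perm)
  resCont : List (AppId × Res × Val)
  sysImg : List AppId

def domain {α β : Type} (l : List (α × β)) : List α := l.map Prod.fst

/-- All component identifiers present in the device. -/
def allCmps (s : AndroidST) : List CompId :=
  (s.manifests.map (fun q => q.2.cmps)).flatten

/-- All identifiers of permissions defined by applications. -/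
def allDefPermIds (s : AndroidST) : List PermId :=
  ((s.defPerms.map Prod.snd).flatten).map Perm.id

/-- Well-formedness of states. -/
def valid_state (s : AndroidST) : Prop :=
  (allCmps s).Nodup ∧
  (allDefPermIds s).Nodup ∧
  (∀ a : AppId, a ∈ domain s.manifests ↔ a ∈ s.apps) ∧
  (∀ a : AppId, a ∈ domain s.certs ↔ a ∈ s.apps) ∧
  (∀ a : AppId, a ∈ domain s.defPerms ↔ a ∈ s.apps) ∧
  (∀ a : AppId, a ∈ domain s.grantedPerms ↔ (a ∈ s.apps ∨ a ∈ s.sysImg)) ∧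
  (∀ a : AppId, a ∈ domain s.grantedPermGroups ↔ (a ∈ s.apps ∨ a ∈ s.sysImg)) ∧
  s.apps.Nodup ∧ s.sysImg.Nodup ∧ (∀ a ∈ s.apps, a ∉ s.sysImg) ∧
  (domain s.manifests).Nodup ∧ (domain s.certs).Nodup ∧
  (domain s.defPerms).Nodup ∧ (domain s.grantedPerms).Nodup ∧
  (domain s.grantedPermGroups).Nodup

/-- The non-system permissions defined in a manifest. -/
def nonSystemUsrP (m : Manifest) : List Perm :=
  m.defines.filter (fun p => p.level ≠ PermLvl.signatureSystem)

/-- The default initial value of resources. -/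
def initVal : Val := 0

/-- The effect of installing a fresh application. -/
def install_post (app : AppId) (m : Manifest) (c : Cert) (lRes : List Res)
    (s : AndroidST) : AndroidST :=
  { apps := app :: s.apps
    grantedPermGroups := (app, []) :: s.grantedPermGroups
    grantedPerms := (app, []) :: s.grantedPerms
    manifests := (app, m) :: s.manifests
    certs := (app, c) :: s.certs
    defPerms := (app, nonSystemUsrP m) :: s.defPerms
    resCont := lRes.map (fun r => (app, r, initVal)) ++ s.resCont
    sysImg := s.sysImg }

/-- Installation preserves validity. -/
theorem install_preserves_validity
    (cmpDeclareIntentFilterCorrectly : CompId → Prop)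
    (s : AndroidST) (app : AppId) (m : Manifest) (c : Cert) (lRes : List Res)
    (hvalid : valid_state s)
    (hnotinst : app ∉ s.apps ∧ app ∉ s.sysImg)
    (hcmpnodup : m.cmps.Nodup)
    (hcmpfresh : ∀ cid ∈ m.cmps, cid ∉ allCmps s)
    (hpermnodup : (m.defines.map Perm.id).Nodup)
    (hpermfresh : ∀ p ∈ m.defines, p.id ∉ allDefPermIds s)
    (hfilters : ∀ cid ∈ m.cmps, cmpDeclareIntentFilterCorrectly cid) :
    valid_state (install_post app m c lRes s) := by
  obtain ⟨h1, h2, h3, h4, h5, h6, h7, h8, h9, h10, h11, h12, h13, h14, h15⟩ := hvalid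
  obtain ⟨hna, hns⟩ := hnotinst
  simp only [domain] at h3 h4 h5 h6 h7
  refine ⟨?_, ?_, ?_, ?_, ?_, ?_, ?_, ?_, h9, ?_, ?_, ?_, ?_, ?_, ?_⟩
  · simp only [allCmps, install_post, List.map_cons, List.flatten_cons, List.nodup_append]
    exact ⟨hcmpnodup, h1, fun x hx y hy hxy => hcmpfresh x hx (by subst hxy; exact hy)⟩
  · simp only [allDefPermIds, install_post, List.map_cons, List.flatten_cons,
      List.map_append, List.nodup_append]
    refine ⟨?_, h2, ?_⟩
    · exact (((List.filter_sublist (l := m.defines)).map Perm.id).nodup hpermnodup)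
    · intro x hx
      simp only [nonSystemUsrP, List.mem_map] at hx
      obtain ⟨p, hp, rfl⟩ := hx
      exact fun b hb hpb => hpermfresh p (List.mem_of_mem_filter hp) (by subst hpb; exact hb)
  · intro a; simp only [install_post, domain, List.map_cons, List.mem_cons]; rw [h3 a]
  · intro a; simp only [install_post, domain, List.map_cons, List.mem_cons]; rw [h4 a]
  · intro a; simp only [install_post, domain, List.map_cons, List.mem_cons]; rw [h5 a]
  · intro a; simp only [install_post, domain, List.map_cons, List.mem_cons]; rw [h6 a]; tauto
  · intro a; simp only [install_post, domain, List.map_cons, List.mem_cons]; rw [h7 a]; tauto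
  · exact List.nodup_cons.2 ⟨hna, h8⟩
  · intro a ha
    rcases List.mem_cons.1 ha with rfl | ha
    · exact hns
    · exact h10 a ha
  · simp only [install_post, domain, List.map_cons, List.nodup_cons]
    exact ⟨fun h => hna ((h3 app).1 h), h11⟩
  · simp only [install_post, domain, List.map_cons, List.nodup_cons]
    exact ⟨fun h => hna ((h4 app).1 h), h12⟩
  · simp only [install_post, domain, List.map_cons, List.nodup_cons]
    exact ⟨fun h => hna ((h5 app).1 h), h13⟩
  · simp only [install_post, domain, List.map_cons, List.nodup_cons]
    exact ⟨fun h => by rcases (h6 app).1 h with h|h <;> [exact hna h; exact hns h], h14⟩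
  · simp only [install_post, domain, List.map_cons, List.nodup_cons]
    exact ⟨fun h => by rcases (h7 app).1 h with h|h <;> [exact hna h; exact hns h], h15⟩
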